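/- Suppose X is a Hilbert space over 𝕂 and fix m ∈ V. Define the linear operator T_m^* on signals by T_m^*g(n) = ∑_{k=1}^N u_k(n)·u_k(m) • ĝ(k). Then T_m^* is the adjoint of the graph translation operator T_m with respect to the inner product ⟨f,g⟩ = ∑_{n=1}^N ⟨f(n),g(n)⟩, i.e., ⟨T_m f, g⟩ = ⟨f, T_m^* g⟩ for all signals f, g. Moreover, if X is nontrivial, T_m is self-adjoint if and only if u_k(m) ∈ ℝ for all k ∈ {1,…,N}. -/

import Mathlib

open Finset
open scoped ENNReal

/-- The `L^p` norm of a signal `f : Fin N → E` (sup-norm when `p = ∞`). -/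
noncomputable def gsNorm {E : Type*} [NormedAddCommGroup E] {N : ℕ} (p : ℝ≥0∞)
    (f : Fin N → E) : ℝ :=
  if p = ∞ then ⨆ n, ‖f n‖ else (∑ n, ‖f n‖ ^ p.toReal) ^ (1 / p.toReal)

/-- `u k` is the `k`-th column of a unitary matrix, i.e. the family of columns is
orthonormal for the standard inner product on `𝕂^N` (hence an orthonormal basis). -/
def OrthoBasis {𝕂 : Type*} [RCLike 𝕂] {N : ℕ} (u : Fin N → Fin N → 𝕂) : Prop :=
  ∀ k l : Fin N, ∑ n, (starRingEnd 𝕂) (u k n) * u l n = if k = l then (1 : 𝕂) else 0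

/-- Graph Fourier transform: `f̂ k = ∑ n, conj (u k n) • f n`. -/
noncomputable def gft {𝕂 : Type*} [RCLike 𝕂] {X : Type*} [NormedAddCommGroup X]
    [NormedSpace 𝕂 X] {N : ℕ} (u : Fin N → Fin N → 𝕂) (f : Fin N → X) : Fin N → X :=
  fun k => ∑ n, (starRingEnd 𝕂) (u k n) • f n

/-- `p`-coherence `κ_p(U)`: the maximum of the `ℓ^p` norms of the columns of `U`. -/
noncomputable def coh {𝕂 : Type*} [RCLike 𝕂] {N : ℕ} (p : ℝ≥0∞)
    (u : Fin N → Fin N → 𝕂) : ℝ :=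
  ⨆ k, gsNorm p (u k)

/-- Mixed norm `‖U‖_{p,q}`: the `ℓ^q` norm of the vector of `ℓ^p` norms of the columns. -/
noncomputable def mixNorm {𝕂 : Type*} [RCLike 𝕂] {N : ℕ} (p q : ℝ≥0∞)
    (u : Fin N → Fin N → 𝕂) : ℝ :=
  gsNorm q (fun k => gsNorm p (u k))

/-- Graph convolution of a scalar signal `α` with a signal `f`:
`(α*f)(n) = ∑ k, u k n • (α̂ k • f̂ k)`. -/
noncomputable def gconv {𝕂 : Type*} [RCLike 𝕂] {X : Type*} [NormedAddCommGroup X]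
    [NormedSpace 𝕂 X] {N : ℕ} (u : Fin N → Fin N → 𝕂) (α : Fin N → 𝕂)
    (f : Fin N → X) : Fin N → X :=
  fun n => ∑ k, u k n • (gft u α k • gft u f k)

/-- Graph translation operator `T_m f (n) = ∑ k, (u k n * conj (u k m)) • f̂ k`. -/
noncomputable def gtrans {𝕂 : Type*} [RCLike 𝕂] {X : Type*} [NormedAddCommGroup X]
    [NormedSpace 𝕂 X] {N : ℕ} (u : Fin N → Fin N → 𝕂) (m : Fin N)
    (f : Fin N → X) : Fin N → X :=
  fun n => ∑ k, (u k n * (starRingEnd 𝕂) (u k m)) • gft u f k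

/-- the adjoint of the graph translation operator `T_m` on a Hilbert
space is `g ↦ (n ↦ ∑ k, (u k n * u k m) • ĝ k)`, and for nontrivial `X`, `T_m` is
self-adjoint iff all entries `u k m` are real. -/
theorem gtrans_adjoint {𝕂 : Type*} [RCLike 𝕂] {X : Type*} [NormedAddCommGroup X]
    [InnerProductSpace 𝕂 X] [CompleteSpace X] {N : ℕ} (hN : 0 < N)
    (u : Fin N → Fin N → 𝕂) (hU : OrthoBasis u) (m : Fin N) :
    (∀ f g : Fin N → X,
      (∑ n, (inner 𝕂 (gtrans u m f n) (g n) : 𝕂)) =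
        ∑ n, (inner 𝕂 (f n) (∑ k, (u k n * u k m) • gft u g k) : 𝕂)) ∧
    (Nontrivial X →
      ((∀ f g : Fin N → X,
          (∑ n, (inner 𝕂 (gtrans u m f n) (g n) : 𝕂)) =
            ∑ n, (inner 𝕂 (f n) (gtrans u m g n) : 𝕂)) ↔
        ∀ k, (starRingEnd 𝕂) (u k m) = u k m)) := by
    -- expansion lemmas
  have expL : ∀ f g : Fin N → X,
      (∑ n, (inner 𝕂 (gtrans u m f n) (g n) : 𝕂)) =
        ∑ n, ∑ k, ∑ j, ((starRingEnd 𝕂) (u k n) * u k m * u k j) * inner 𝕂 (f j) (g n) := by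
    intro f g
    refine Finset.sum_congr rfl fun n _ => ?_
    simp [gtrans, gft, sum_inner, inner_smul_left, Finset.mul_sum, mul_assoc]
  have expR : ∀ (c : Fin N → 𝕂) (f g : Fin N → X),
      (∑ n, (inner 𝕂 (f n) (∑ k, (u k n * c k) • gft u g k) : 𝕂)) =
        ∑ n, ∑ k, ∑ j, (u k n * c k * (starRingEnd 𝕂) (u k j)) * inner 𝕂 (f n) (g j) := by
    intro c f g
    refine Finset.sum_congr rfl fun n _ => ?_
    simp [gft, inner_sum, inner_smul_right, Finset.mul_sum, mul_assoc]
  have part1 : ∀ f g : Fin N → X,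
      (∑ n, (inner 𝕂 (gtrans u m f n) (g n) : 𝕂)) =
        ∑ n, (inner 𝕂 (f n) (∑ k, (u k n * u k m) • gft u g k) : 𝕂) := by
    intro f g
    rw [expL f g, expR (fun k => u k m) f g]
    rw [Finset.sum_comm]
    conv_rhs => rw [Finset.sum_comm]
    refine Finset.sum_congr rfl fun k _ => ?_
    rw [Finset.sum_comm]
    exact Finset.sum_congr rfl fun n _ => Finset.sum_congr rfl fun j _ => by ring
  refine ⟨part1, fun hX => ⟨fun H => ?_, fun hreal f g => ?_⟩⟩
  · -- forward direction
    set c : Fin N → 𝕂 := fun k => u k m - (starRingEnd 𝕂) (u k m) with hc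
    have hD : ∀ f g : Fin N → X,
        (∑ n, (inner 𝕂 (f n) (∑ k, (u k n * c k) • gft u g k) : 𝕂)) = 0 := by
      intro f g
      have h1 := part1 f g
      have h2 := H f g
      have h3 : (∑ n, (inner 𝕂 (f n) (∑ k, (u k n * u k m) • gft u g k) : 𝕂))
          = ∑ n, (inner 𝕂 (f n) (∑ k, (u k n * (starRingEnd 𝕂) (u k m)) • gft u g k) : 𝕂) := by
        rw [← h1, h2]; rfl
      rw [expR] at h3 ⊢
      rw [expR (fun k => (starRingEnd 𝕂) (u k m))] at h3
      calc ∑ n, ∑ k, ∑ j, (u k n * c k * (starRingEnd 𝕂) (u k j)) * (inner 𝕂 (f n) (g j) : 𝕂)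
          = (∑ n, ∑ k, ∑ j, (u k n * u k m * (starRingEnd 𝕂) (u k j)) * (inner 𝕂 (f n) (g j) : 𝕂))
            - ∑ n, ∑ k, ∑ j, (u k n * (starRingEnd 𝕂) (u k m) * (starRingEnd 𝕂) (u k j)) *
              (inner 𝕂 (f n) (g j) : 𝕂) := by
            simp only [← Finset.sum_sub_distrib]
            refine Finset.sum_congr rfl fun n _ => Finset.sum_congr rfl fun k _ =>
              Finset.sum_congr rfl fun j _ => ?_
            simp only [hc]; ring
        _ = 0 := by rw [h3, sub_self]
    have hDzero : ∀ (g : Fin N → X) (n : Fin N),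
        (∑ k, (u k n * c k) • gft u g k) = 0 := by
      intro g n
      set h : Fin N → X := fun n => ∑ k, (u k n * c k) • gft u g k with hh
      have hz := hD h g
      have hre : ∑ n, RCLike.re (inner 𝕂 (h n) (h n) : 𝕂) = 0 := by
        have := congrArg RCLike.re hz
        simpa only [map_sum, map_zero] using this
      have h1 : ∀ i ∈ Finset.univ, (0:ℝ) ≤ RCLike.re (inner 𝕂 (h i) (h i) : 𝕂) :=
        fun i _ => inner_self_nonneg
      have h2 := (Finset.sum_eq_zero_iff_of_nonneg h1).mp hre n (Finset.mem_univ n)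
      have : (inner 𝕂 (h n) (h n) : 𝕂) = 0 := by
        rw [← @inner_self_ofReal_re 𝕂, h2]; simp
      exact inner_self_eq_zero.mp this
    obtain ⟨x, hx⟩ := exists_ne (0 : X)
    have hS : ∀ n p : Fin N, (∑ k, u k n * c k * (starRingEnd 𝕂) (u k p)) = 0 := by
      intro n p
      have h0 := hDzero (Pi.single p x) n
      have hgft : ∀ k, gft u (Pi.single p x) k = (starRingEnd 𝕂) (u k p) • x := by
        intro k; simp [gft, Pi.single_apply, smul_ite, Finset.sum_ite_eq']
      rw [show (∑ k, (u k n * c k) • gft u (Pi.single p x) k)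
          = (∑ k, u k n * c k * (starRingEnd 𝕂) (u k p)) • x from ?_] at h0
      · exact (smul_eq_zero.mp h0).resolve_right hx
      · rw [Finset.sum_smul]
        exact Finset.sum_congr rfl fun k _ => by rw [hgft, smul_smul]
    intro l
    have key : ∑ n, ∑ p, (starRingEnd 𝕂) (u l n) * u l p *
        (∑ k, u k n * c k * (starRingEnd 𝕂) (u k p)) = c l := by
      have h1 : ∀ n p : Fin N, (starRingEnd 𝕂) (u l n) * u l p *
          (∑ k, u k n * c k * (starRingEnd 𝕂) (u k p))
          = ∑ k, c k * (((starRingEnd 𝕂) (u l n) * u k n) *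
              ((starRingEnd 𝕂) (u k p) * u l p)) := by
        intro n p; rw [Finset.mul_sum]
        exact Finset.sum_congr rfl fun k _ => by ring
      simp_rw [h1]
      calc ∑ n, ∑ p, ∑ k, c k * (((starRingEnd 𝕂) (u l n) * u k n) *
              ((starRingEnd 𝕂) (u k p) * u l p))
          = ∑ n, ∑ k, ∑ p, c k * (((starRingEnd 𝕂) (u l n) * u k n) *
              ((starRingEnd 𝕂) (u k p) * u l p)) :=
            Finset.sum_congr rfl fun n _ => Finset.sum_comm
        _ = ∑ k, ∑ n, ∑ p, c k * (((starRingEnd 𝕂) (u l n) * u k n) *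
              ((starRingEnd 𝕂) (u k p) * u l p)) :=
            Finset.sum_comm
        _ = ∑ k, c k * ((∑ n, (starRingEnd 𝕂) (u l n) * u k n) *
              (∑ p, (starRingEnd 𝕂) (u k p) * u l p)) := by
            refine Finset.sum_congr rfl fun k _ => ?_
            rw [Finset.sum_mul_sum, Finset.mul_sum]
            exact Finset.sum_congr rfl fun n _ => by rw [Finset.mul_sum]
        _ = ∑ k, c k * ((if l = k then (1:𝕂) else 0) * (if k = l then (1:𝕂) else 0)) :=
            Finset.sum_congr rfl fun k _ => by rw [hU l k, hU k l]
        _ = c l := by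
            rw [Finset.sum_eq_single l (fun k _ hk => by simp [hk, Ne.symm hk])
              (fun h => absurd (Finset.mem_univ l) h)]
            simp
    rw [Finset.sum_eq_zero (fun n _ => Finset.sum_eq_zero fun p _ => by
      rw [hS n p, mul_zero])] at key
    have hcl : u l m - (starRingEnd 𝕂) (u l m) = 0 := key.symm
    exact (sub_eq_zero.mp hcl).symm
  · -- reverse direction
    rw [part1 f g]
    refine Finset.sum_congr rfl fun n _ => ?_
    congr 1
    exact (Finset.sum_congr rfl fun k _ => by rw [hreal k]).symm
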